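/- Let a : Fin n → ℤ, and define sequences b, c of length 2n by b[k] = Σ_{i=0}^{k} a[i] for k < n, c[k] = -Σ_{i=0}^{n-k-1} a[i] for k ≤ n (empty sum is 0), and b[k] = c[k] = -D otherwise, where D is more than twice the absolute value of any partial sum of a. Then for each 1 ≤ k ≤ n, the (n+k-1)-th entry of the max-plus convolution of b and c equals the maximum over all windows of length k of the sum of k consecutive elements of a, i.e., max_{k-1 ≤ j < n} Σ_{i=j-k+1}^{j} a[i]. -/

import Mathlib

theorem stmt_8 (n : ℕ) (hn : 0 < n) (a b c : ℕ → ℤ) (D : ℤ)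
    (hD : ∀ k ≤ n, 2 * |∑ i ∈ Finset.range k, a i| < D)
    (hb1 : ∀ k < n, b k = ∑ i ∈ Finset.range (k + 1), a i)
    (hb2 : ∀ k, n ≤ k → k < 2 * n → b k = -D)
    (hc1 : ∀ k ≤ n, c k = -∑ i ∈ Finset.range (n - k), a i)
    (hc2 : ∀ k, n < k → k < 2 * n → c k = -D) :
    ∀ k, 1 ≤ k → k ≤ n →
      ∃ M : ℤ,
        IsGreatest {s : ℤ | ∃ i j : ℕ, i < 2 * n ∧ j < 2 * n ∧
          i + j = n + k - 1 ∧ s = b i + c j} M ∧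
        IsGreatest {s : ℤ | ∃ j : ℕ, k - 1 ≤ j ∧ j < n ∧
          s = ∑ i ∈ Finset.Icc (j + 1 - k) j, a i} M := by
  intro k hk1 hkn
  set S : ℕ → ℤ := fun m => ∑ i ∈ Finset.range m, a i with hSdef
  have key : ∀ j : ℕ, k - 1 ≤ j →
      (∑ i ∈ Finset.Icc (j + 1 - k) j, a i) = S (j + 1) - S (j + 1 - k) := by
    intro j hj
    have h1 : j + 1 - k ≤ j + 1 := by omega
    rw [← Finset.Ico_add_one_right_eq_Icc, Finset.sum_Ico_eq_sub _ h1]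
  have hne : (Finset.Icc (k - 1) (n - 1)).Nonempty := ⟨k - 1, by simp; omega⟩
  set w : ℕ → ℤ := fun j => ∑ i ∈ Finset.Icc (j + 1 - k) j, a i with hw
  set M := (Finset.Icc (k - 1) (n - 1)).sup' hne w with hM
  obtain ⟨j0, hj0mem, hj0⟩ := Finset.exists_mem_eq_sup' hne w
  rw [Finset.mem_Icc] at hj0mem
  -- w (k-1) = S k
  have hwk : w (k - 1) = S k := by
    have h0 : k - 1 + 1 - k = 0 := by omega
    have h1 : k - 1 + 1 = k := by omega
    show (∑ i ∈ Finset.Icc (k - 1 + 1 - k) (k - 1), a i) = S k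
    rw [key (k - 1) le_rfl, h0, h1]
    simp [hSdef]
  have hMk : S k ≤ M := by
    rw [← hwk]
    exact Finset.le_sup' w (by rw [Finset.mem_Icc]; omega)
  refine ⟨M, ⟨⟨j0, n + k - 1 - j0, by omega, by omega, by omega, ?_⟩, ?_⟩,
    ⟨⟨j0, by omega, by omega, hj0⟩, ?_⟩⟩
  · -- M = b j0 + c (n+k-1-j0)
    rw [hb1 j0 (by omega), hc1 (n + k - 1 - j0) (by omega)]
    have h2 : n - (n + k - 1 - j0) = j0 + 1 - k := by omega
    rw [h2]
    show M = S (j0 + 1) + -S (j0 + 1 - k)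
    rw [hM, hj0]
    show (∑ i ∈ Finset.Icc (j0 + 1 - k) j0, a i) = _
    rw [key j0 (by omega)]
    ring
  · -- upper bound for set1
    rintro s ⟨i, j, hi, hj, hij, hs⟩
    by_cases hin : i < n
    · by_cases hjn : j ≤ n
      · have hik : k - 1 ≤ i := by omega
        have hnj : n - j = i + 1 - k := by omega
        have : s = w i := by
          rw [hs, hb1 i hin, hc1 j hjn, hnj]
          show S (i + 1) + -S (i + 1 - k) = ∑ m ∈ Finset.Icc (i + 1 - k) i, a m
          rw [key i hik]
          ring
        rw [this]
        exact Finset.le_sup' w (by rw [Finset.mem_Icc]; omega)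
      · -- j > n, so c j = -D, i + 1 ≤ k - 1
        have hcj : c j = -D := hc2 j (by omega) hj
        have hbi : b i = S (i + 1) := hb1 i hin
        have h1 : 2 * |S (i + 1)| < D := hD (i + 1) (by omega)
        have h2 : 2 * |S k| < D := hD k hkn
        have := le_abs_self (S (i + 1))
        have := neg_abs_le (S k)
        have : s ≤ S k := by rw [hs, hbi, hcj]; linarith
        linarith
    · -- i ≥ n, so b i = -D, j ≤ k - 1 ≤ n
      have hbi : b i = -D := hb2 i (by omega) hi
      have hcj : c j = -S (n - j) := hc1 j (by omega)
      have h1 : 2 * |S (n - j)| < D := hD (n - j) (by omega)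
      have h2 : 2 * |S k| < D := hD k hkn
      have := neg_abs_le (S (n - j))
      have := neg_abs_le (S k)
      have : s ≤ S k := by rw [hs, hbi, hcj]; linarith
      linarith
  · -- upper bound for set2
    rintro s ⟨j, hj1, hj2, hs⟩
    rw [hs]
    exact Finset.le_sup' w (by rw [Finset.mem_Icc]; omega)
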